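/- Suppose on an interval I the functions m, p_m, p_v satisfy ṁ = −(T_max/(I_sp g₀))c, ṗ_m = c T_max ‖p_v‖/m², ṗ_v = −p_r, with m > 0, ‖p_v‖ > 0, and the switching function S = ‖p_v‖/m − p_m/(I_sp g₀) vanishes identically on I. Then p_v(t) · p_r(t) = 0 for all t in I. -/

import Mathlib

open Real Set

theorem stmt_6 (pr pv : ℝ → EuclideanSpace ℝ (Fin 3)) (pm m c : ℝ → ℝ)
    (a b : ℝ) (hab : a < b)
    (Tmax Isp g0 : ℝ) (hT : 0 < Tmax) (hIsp : 0 < Isp) (hg : 0 < g0)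
    (hmdot : ∀ t ∈ Ioo a b, HasDerivAt m (-(Tmax / (Isp * g0)) * c t) t)
    (hpmdot : ∀ t ∈ Ioo a b, HasDerivAt pm (c t * Tmax * ‖pv t‖ / (m t) ^ 2) t)
    (hpvdot : ∀ t ∈ Ioo a b, HasDerivAt pv (-(pr t)) t)
    (hm : ∀ t ∈ Ioo a b, 0 < m t)
    (hpv : ∀ t ∈ Ioo a b, 0 < ‖pv t‖)
    (hS : ∀ t ∈ Ioo a b, ‖pv t‖ / m t - pm t / (Isp * g0) = 0) :
    ∀ t ∈ Ioo a b, inner ℝ (pv t) (pr t) = (0 : ℝ) := by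
  intro t ht
  set K := Isp * g0 with hK
  have hK0 : K ≠ 0 := by positivity
  have hmt : m t ≠ 0 := (hm t ht).ne'
  -- ‖pv‖² = (m * pm / K)² on Ioo a b
  have heq : ∀ s ∈ Ioo a b, ‖pv s‖ ^ 2 = (m s * pm s / K) ^ 2 := by
    intro s hs
    have h := hS s hs
    have hms : m s ≠ 0 := (hm s hs).ne'
    have : ‖pv s‖ = m s * pm s / K := by
      field_simp at h ⊢
      linarith
    rw [this]
  -- derivative of ‖pv‖²
  have h1 : HasDerivAt (fun s => ‖pv s‖ ^ 2) (2 * inner ℝ (pv t) (-(pr t))) t :=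
    (hpvdot t ht).norm_sq
  -- derivative of (m * pm / K)²
  have h2 : HasDerivAt (fun s => (m s * pm s / K) ^ 2)
      (2 * (m t * pm t / K) *
        ((-(Tmax / K) * c t * pm t + m t * (c t * Tmax * ‖pv t‖ / (m t) ^ 2)) / K)) t := by
    have : HasDerivAt (fun s => (m s * pm s / K) ^ 2) _ t := (((hmdot t ht).fun_mul (hpmdot t ht)).div_const K).fun_pow 2
    convert this using 1
    ring
  -- the two functions agree on a neighborhood, so derivatives agree
  have hnhds : (fun s => ‖pv s‖ ^ 2) =ᶠ[nhds t] (fun s => (m s * pm s / K) ^ 2) := by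
    filter_upwards [Ioo_mem_nhds ht.1 ht.2] with s hs using heq s hs
  have h1' : HasDerivAt (fun s => (m s * pm s / K) ^ 2) (2 * inner ℝ (pv t) (-(pr t))) t :=
    h1.congr_of_eventuallyEq hnhds.symm
  have hder : (2 : ℝ) * inner ℝ (pv t) (-(pr t)) =
      2 * (m t * pm t / K) *
        ((-(Tmax / K) * c t * pm t + m t * (c t * Tmax * ‖pv t‖ / (m t) ^ 2)) / K) :=
    h1'.unique h2
  -- the RHS vanishes since S = 0
  have hSt := hS t ht
  have hpmK : pm t = K * ‖pv t‖ / m t := by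
    field_simp at hSt
    field_simp
    linarith
  have hrhs : (-(Tmax / K) * c t * pm t + m t * (c t * Tmax * ‖pv t‖ / (m t) ^ 2)) = 0 := by
    rw [hpmK]
    field_simp
    ring
  rw [hrhs] at hder
  simp only [zero_div, mul_zero] at hder
  have : inner ℝ (pv t) (-(pr t)) = (0 : ℝ) := by linarith [hder]
  rw [inner_neg_right] at this
  linarith
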